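/- arXiv:2206.11108 — 5 statements merged into one kernel-verified Lean document; each statement's English description precedes it below -/
import Mathlib

section
/- Let 0 ≤ a < b, λ > 0, κ > 0, and let Φ : ℝ → ℝ be defined by Φ(y) = 0 for y ≤ a, Φ(y) = (y−a)/(b−a) for a ≤ y ≤ b, and Φ(y) = 1 for y ≥ b. Suppose f : [0,∞) → ℝ is continuous and satisfies f(x) = κ + λ·∫₀ˣ f(t)·(1 − Φ(x−t)) dt for all x ≥ 0. Then f is differentiable on (0,∞) and f′(x) = λ·f(x) − (λ/(b−a))·∫_{max{x−b,0}}^{max{x−a,0}} f(t) dt for every x > 0. -/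
open MeasureTheory intervalIntegral

/-- If `f` is continuous on `[0,∞)` and satisfies the integral
equation `f(x) = κ + λ·∫₀ˣ f(t)·(1 − Φ(x−t)) dt` for all `x ≥ 0`, where `Φ` is
the Uniform[a,b] cumulative distribution function, then `f` is differentiable
on `(0,∞)` with `f′(x) = λ·f(x) − (λ/(b−a))·∫_{max(x−b,0)}^{max(x−a,0)} f(t) dt`. -/
theorem stmt_1 (a b lam κ : ℝ) (Φ f : ℝ → ℝ)
    (ha : 0 ≤ a) (hab : a < b) (hlam : 0 < lam) (hκ : 0 < κ)
    (hΦ1 : ∀ y : ℝ, y ≤ a → Φ y = 0)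
    (hΦ2 : ∀ y : ℝ, a ≤ y → y ≤ b → Φ y = (y - a) / (b - a))
    (hΦ3 : ∀ y : ℝ, b ≤ y → Φ y = 1)
    (hf_cont : ContinuousOn f (Set.Ici 0))
    (hf : ∀ x : ℝ, 0 ≤ x →
      f x = κ + lam * ∫ t in (0:ℝ)..x, f t * (1 - Φ (x - t))) :
    ∀ x : ℝ, 0 < x →
      HasDerivAt f
        (lam * f x - (lam / (b - a)) * ∫ t in (max (x - b) 0)..(max (x - a) 0), f t) x := by
  have hba : (0:ℝ) < b - a := sub_pos.mpr hab
  have hb0 : (0:ℝ) ≤ b := ha.trans hab.le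
  -- continuous extension of f
  set g : ℝ → ℝ := fun t => f (max t 0) with hg_def
  have hg_cont : Continuous g :=
    hf_cont.comp_continuous (continuous_id.max continuous_const) fun t => le_max_right t 0
  have hgf : ∀ t : ℝ, 0 ≤ t → g t = f t := fun t ht => by
    simp only [hg_def, max_eq_left ht]
  -- primitive of g
  set F : ℝ → ℝ := fun u => ∫ s in (0:ℝ)..u, g s with hF_def
  have hF_deriv : ∀ u : ℝ, HasDerivAt F (g u) u := fun u =>
    (hg_cont.integral_hasStrictDerivAt 0 u).hasDerivAt
  have hF0 : F 0 = 0 := intervalIntegral.integral_same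
  have hF_cont : Continuous F :=
    continuous_iff_continuousAt.mpr fun u => (hF_deriv u).continuousAt
  -- Φ in terms of max
  have hΦeq : ∀ y : ℝ, Φ y = (max (y - a) 0 - max (y - b) 0) / (b - a) := by
    intro y
    rcases le_total y a with h | h
    · rw [hΦ1 y h, max_eq_right (by linarith), max_eq_right (by linarith)]
      simp
    · rcases le_total y b with h2 | h2
      · rw [hΦ2 y h h2, max_eq_left (by linarith), max_eq_right (by linarith), sub_zero]
      · rw [hΦ3 y h2, max_eq_left (by linarith), max_eq_left (by linarith),
          eq_comm, div_eq_one_iff_eq hba.ne']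
        ring
  -- integration by parts
  have L1 : ∀ y : ℝ, (∫ t in (0:ℝ)..y, g t * (y - t)) = ∫ u in (0:ℝ)..y, F u := by
    intro y
    have hu : ∀ t ∈ Set.uIcc (0:ℝ) y, HasDerivAt F (g t) t := fun t _ => hF_deriv t
    have hv : ∀ t ∈ Set.uIcc (0:ℝ) y, HasDerivAt (fun s : ℝ => s - y) 1 t := fun t _ =>
      (hasDerivAt_id t).sub_const y
    have h := intervalIntegral.integral_mul_deriv_eq_deriv_mul hu hv
      (hg_cont.intervalIntegrable 0 y) (intervalIntegrable_const)
    simp only [mul_one, sub_self, mul_zero, hF0, zero_mul, zero_sub, neg_zero] at h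
    have h2 : (∫ t in (0:ℝ)..y, g t * (y - t)) = -∫ t in (0:ℝ)..y, g t * (t - y) := by
      rw [← intervalIntegral.integral_neg]
      apply intervalIntegral.integral_congr
      intro t _
      ring
    rw [h2, ← h]
  -- key identity
  have L2 : ∀ c x : ℝ, 0 ≤ c → 0 ≤ x →
      (∫ t in (0:ℝ)..x, g t * max (x - t - c) 0) = ∫ s in (0:ℝ)..x, F (max (s - c) 0) := by
    intro c x hc hx
    rcases le_total x c with hxc | hcx
    · have hL : (∫ t in (0:ℝ)..x, g t * max (x - t - c) 0) = ∫ t in (0:ℝ)..x, (0:ℝ) := by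
        apply intervalIntegral.integral_congr
        intro t ht
        rw [Set.uIcc_of_le hx] at ht
        show g t * max (x - t - c) 0 = (0:ℝ)
        rw [max_eq_right (by linarith [ht.1] : x - t - c ≤ 0), mul_zero]
      have hR : (∫ s in (0:ℝ)..x, F (max (s - c) 0)) = ∫ s in (0:ℝ)..x, (0:ℝ) := by
        apply intervalIntegral.integral_congr
        intro s hs
        rw [Set.uIcc_of_le hx] at hs
        show F (max (s - c) 0) = (0:ℝ)
        rw [max_eq_right (by linarith [hs.2] : s - c ≤ 0), hF0]
      rw [hL, hR]
    · -- c < x case (c ≤ x)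
      have hint1 : IntervalIntegrable (fun t => g t * max (x - t - c) 0) volume 0 (x - c) :=
        (hg_cont.mul (((continuous_const.sub continuous_id).sub
          continuous_const).max continuous_const)).intervalIntegrable _ _
      have hint2 : IntervalIntegrable (fun t => g t * max (x - t - c) 0) volume (x - c) x :=
        (hg_cont.mul (((continuous_const.sub continuous_id).sub
          continuous_const).max continuous_const)).intervalIntegrable _ _
      have hsplitL : (∫ t in (0:ℝ)..x, g t * max (x - t - c) 0)
          = (∫ t in (0:ℝ)..(x - c), g t * max (x - t - c) 0)
            + ∫ t in (x - c)..x, g t * max (x - t - c) 0 :=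
        (intervalIntegral.integral_add_adjacent_intervals hint1 hint2).symm
      have hzero2 : (∫ t in (x - c)..x, g t * max (x - t - c) 0) = 0 := by
        have : (∫ t in (x - c)..x, g t * max (x - t - c) 0) = ∫ t in (x - c)..x, (0:ℝ) := by
          apply intervalIntegral.integral_congr
          intro t ht
          rw [Set.uIcc_of_le (by linarith : x - c ≤ x)] at ht
          show g t * max (x - t - c) 0 = (0:ℝ)
          rw [max_eq_right (by linarith [ht.1] : x - t - c ≤ 0), mul_zero]
        rw [this, intervalIntegral.integral_zero]
      have hfirst : (∫ t in (0:ℝ)..(x - c), g t * max (x - t - c) 0)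
          = ∫ u in (0:ℝ)..(x - c), F u := by
        rw [← L1 (x - c)]
        apply intervalIntegral.integral_congr
        intro t ht
        rw [Set.uIcc_of_le (by linarith : (0:ℝ) ≤ x - c)] at ht
        show g t * max (x - t - c) 0 = g t * ((x - c) - t)
        rw [max_eq_left (by linarith [ht.2] : 0 ≤ x - t - c)]
        ring_nf
      -- right side
      have hintF1 : IntervalIntegrable (fun s => F (max (s - c) 0)) volume 0 c :=
        ((hF_cont.comp ((continuous_id.sub continuous_const).max
          continuous_const))).intervalIntegrable _ _
      have hintF2 : IntervalIntegrable (fun s => F (max (s - c) 0)) volume c x :=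
        ((hF_cont.comp ((continuous_id.sub continuous_const).max
          continuous_const))).intervalIntegrable _ _
      have hsplitR : (∫ s in (0:ℝ)..x, F (max (s - c) 0))
          = (∫ s in (0:ℝ)..c, F (max (s - c) 0)) + ∫ s in c..x, F (max (s - c) 0) :=
        (intervalIntegral.integral_add_adjacent_intervals hintF1 hintF2).symm
      have hzeroR : (∫ s in (0:ℝ)..c, F (max (s - c) 0)) = 0 := by
        have : (∫ s in (0:ℝ)..c, F (max (s - c) 0)) = ∫ s in (0:ℝ)..c, (0:ℝ) := by
          apply intervalIntegral.integral_congr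
          intro s hs
          rw [Set.uIcc_of_le hc] at hs
          show F (max (s - c) 0) = (0:ℝ)
          rw [max_eq_right (by linarith [hs.2] : s - c ≤ 0), hF0]
        rw [this, intervalIntegral.integral_zero]
      have hlastR : (∫ s in c..x, F (max (s - c) 0)) = ∫ u in (0:ℝ)..(x - c), F u := by
        have h1 : (∫ s in c..x, F (max (s - c) 0)) = ∫ s in c..x, F (s - c) := by
          apply intervalIntegral.integral_congr
          intro s hs
          rw [Set.uIcc_of_le hcx] at hs
          show F (max (s - c) 0) = F (s - c)
          rw [max_eq_left (by linarith [hs.1] : 0 ≤ s - c)]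
        rw [h1, intervalIntegral.integral_comp_sub_right (fun u => F u) c, sub_self]
      rw [hsplitL, hzero2, add_zero, hfirst, hsplitR, hzeroR, zero_add, hlastR]
  -- main representation of f
  have hmain : ∀ z : ℝ, 0 ≤ z →
      f z = κ + lam * (F z - (1 / (b - a)) *
        ((∫ s in (0:ℝ)..z, F (max (s - a) 0)) - ∫ s in (0:ℝ)..z, F (max (s - b) 0))) := by
    intro z hz
    rw [hf z hz]
    have hint1 : IntervalIntegrable g volume 0 z := hg_cont.intervalIntegrable _ _
    have hintA : IntervalIntegrable (fun t => g t * max (z - t - a) 0) volume 0 z :=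
      (hg_cont.mul (((continuous_const.sub continuous_id).sub
        continuous_const).max continuous_const)).intervalIntegrable _ _
    have hintB : IntervalIntegrable (fun t => g t * max (z - t - b) 0) volume 0 z :=
      (hg_cont.mul (((continuous_const.sub continuous_id).sub
        continuous_const).max continuous_const)).intervalIntegrable _ _
    have hcongr : (∫ t in (0:ℝ)..z, f t * (1 - Φ (z - t)))
        = ∫ t in (0:ℝ)..z, (g t - (1 / (b - a)) *
            (g t * max (z - t - a) 0 - g t * max (z - t - b) 0)) := by
      apply intervalIntegral.integral_congr
      intro t ht
      rw [Set.uIcc_of_le hz] at ht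
      show f t * (1 - Φ (z - t)) = g t - (1 / (b - a)) *
            (g t * max (z - t - a) 0 - g t * max (z - t - b) 0)
      rw [← hgf t ht.1, hΦeq (z - t)]
      field_simp
    rw [hcongr]
    rw [intervalIntegral.integral_sub hint1 ((hintA.sub hintB).const_mul _),
      intervalIntegral.integral_const_mul,
      intervalIntegral.integral_sub hintA hintB,
      L2 a z ha hz, L2 b z hb0 hz]
  -- now differentiate
  intro x hx
  have hA : HasDerivAt (fun z => ∫ s in (0:ℝ)..z, F (max (s - a) 0)) (F (max (x - a) 0)) x :=
    ((hF_cont.comp ((continuous_id.sub continuous_const).max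
      continuous_const)).integral_hasStrictDerivAt 0 x).hasDerivAt
  have hB : HasDerivAt (fun z => ∫ s in (0:ℝ)..z, F (max (s - b) 0)) (F (max (x - b) 0)) x :=
    ((hF_cont.comp ((continuous_id.sub continuous_const).max
      continuous_const)).integral_hasStrictDerivAt 0 x).hasDerivAt
  have hR : HasDerivAt (fun z => κ + lam * (F z - (1 / (b - a)) *
        ((∫ s in (0:ℝ)..z, F (max (s - a) 0)) - ∫ s in (0:ℝ)..z, F (max (s - b) 0))))
      (lam * (g x - (1 / (b - a)) * (F (max (x - a) 0) - F (max (x - b) 0)))) x :=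
    (((hF_deriv x).sub ((hA.sub hB).const_mul _)).const_mul lam).const_add κ
  have hfR : f =ᶠ[nhds x] fun z => κ + lam * (F z - (1 / (b - a)) *
        ((∫ s in (0:ℝ)..z, F (max (s - a) 0)) - ∫ s in (0:ℝ)..z, F (max (s - b) 0))) := by
    filter_upwards [eventually_gt_nhds hx] with z hz
    exact hmain z hz.le
  have hD := hR.congr_of_eventuallyEq hfR
  -- final rewriting
  have hpq : (∫ t in (max (x - b) 0)..(max (x - a) 0), f t)
      = F (max (x - a) 0) - F (max (x - b) 0) := by
    have h1 : (∫ t in (max (x - b) 0)..(max (x - a) 0), f t)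
        = ∫ t in (max (x - b) 0)..(max (x - a) 0), g t := by
      apply intervalIntegral.integral_congr
      intro t ht
      have hpl : (0:ℝ) ≤ max (x - b) 0 := le_max_right _ _
      have hql : (0:ℝ) ≤ max (x - a) 0 := le_max_right _ _
      have ht0 : 0 ≤ t := le_trans (le_inf hpl hql) ht.1
      exact (hgf t ht0).symm
    rw [h1]
    exact (intervalIntegral.integral_interval_sub_left
      (hg_cont.intervalIntegrable _ _) (hg_cont.intervalIntegrable _ _)).symm
  rw [hpq, ← hgf x hx.le]
  refine hD.congr_deriv ?_
  ring
end

section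
/- Let 0 ≤ a < b, λ > 0, and ρ = λ·(a+b)/2 with ρ < 1. Define Θ(s) = (exp(−a·s) − exp(−b·s))/((b−a)·s) and F(s) = (1−ρ)·s/(s − λ + λ·Θ(s)) for s > 0. Then lim_{s→∞} s·(F(s) − (1−ρ)) = λ·(1−ρ). -/
open Filter Topology

/-- initial value theorem: with `Θ` the Laplace transform of the
Uniform[a,b] density and `F` the Pollaczek–Khinchine transform, one has
`lim_{s→∞} s·(F(s) − (1−ρ)) = λ·(1−ρ)`. -/
theorem stmt_4 (a b lam ρ : ℝ) (Θ F : ℝ → ℝ)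
    (ha : 0 ≤ a) (hab : a < b) (hlam : 0 < lam)
    (hρ : ρ = lam * (a + b) / 2) (hρ1 : ρ < 1)
    (hΘ : ∀ s : ℝ, 0 < s →
      Θ s = (Real.exp (-a * s) - Real.exp (-b * s)) / ((b - a) * s))
    (hF : ∀ s : ℝ, 0 < s → F s = (1 - ρ) * s / (s - lam + lam * Θ s)) :
    Tendsto (fun s : ℝ => s * (F s - (1 - ρ))) atTop (𝓝 (lam * (1 - ρ))) := by
  have hba : (0:ℝ) < b - a := sub_pos.2 hab
  -- Θ is nonnegative for s > 0
  have hΘ0 : ∀ s : ℝ, 0 < s → 0 ≤ Θ s := by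
    intro s hs
    rw [hΘ s hs]
    apply div_nonneg
    · have : Real.exp (-b * s) ≤ Real.exp (-a * s) := by
        apply Real.exp_le_exp.2; nlinarith
      linarith
    · positivity
  -- Θ is bounded above by 1/((b-a) s)
  have hΘle : ∀ s : ℝ, 0 < s → Θ s ≤ 1 / ((b - a) * s) := by
    intro s hs
    rw [hΘ s hs]
    have h1 : Real.exp (-a * s) ≤ 1 := by
      rw [Real.exp_le_one_iff]; nlinarith
    have h2 : 0 < Real.exp (-b * s) := Real.exp_pos _
    gcongr
    linarith
  -- Θ → 0 at infinity
  have hΘtend : Tendsto Θ atTop (𝓝 0) := by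
    have hbig : Tendsto (fun s : ℝ => (b - a) * s) atTop atTop :=
      Tendsto.const_mul_atTop hba tendsto_id
    have hinv : Tendsto (fun s : ℝ => 1 / ((b - a) * s)) atTop (𝓝 0) := by
      have h := tendsto_inv_atTop_zero.comp hbig
      simp only [Function.comp_def] at h
      simpa [one_div] using h
    refine squeeze_zero' ?_ ?_ hinv
    · filter_upwards [eventually_gt_atTop 0] with s hs using hΘ0 s hs
    · filter_upwards [eventually_gt_atTop 0] with s hs using hΘle s hs
  have hs_inv : Tendsto (fun s : ℝ => 1 / s) atTop (𝓝 (0:ℝ)) := by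
    simpa [one_div] using tendsto_inv_atTop_zero
  -- the auxiliary function
  have hdentend : Tendsto (fun s : ℝ => 1 - lam / s + lam * Θ s / s) atTop (𝓝 1) := by
    have h1 : Tendsto (fun s : ℝ => lam / s) atTop (𝓝 0) := by
      simpa [div_eq_mul_inv] using hs_inv.const_mul lam
    have h2 : Tendsto (fun s : ℝ => lam * Θ s / s) atTop (𝓝 0) := by
      have := (hΘtend.const_mul lam).mul hs_inv
      simpa [div_eq_mul_inv, mul_assoc, one_div] using this
    have h3 : Tendsto (fun s : ℝ => (1:ℝ) - lam / s + lam * Θ s / s) atTop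
        (𝓝 (1 - 0 + 0)) := (tendsto_const_nhds.sub h1).add h2
    simpa using h3
  have hnumtend : Tendsto (fun s : ℝ => 1 - Θ s) atTop (𝓝 1) := by
    simpa using tendsto_const_nhds.sub hΘtend
  have hg : Tendsto
      (fun s : ℝ => lam * (1 - ρ) * ((1 - Θ s) / (1 - lam / s + lam * Θ s / s)))
      atTop (𝓝 (lam * (1 - ρ))) := by
    have := (hnumtend.div hdentend one_ne_zero).const_mul (lam * (1 - ρ))
    simpa using this
  refine hg.congr' ?_
  filter_upwards [eventually_gt_atTop (max 1 lam)] with s hs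
  have hs1 : (1:ℝ) < s := lt_of_le_of_lt (le_max_left _ _) hs
  have hslam : lam < s := lt_of_le_of_lt (le_max_right _ _) hs
  have hs0 : (0:ℝ) < s := by linarith
  have hΘs : 0 ≤ Θ s := hΘ0 s hs0
  have hD : s - lam + lam * Θ s ≠ 0 := by
    have : 0 < s - lam + lam * Θ s := by nlinarith
    linarith
  have hd : 1 - lam / s + lam * Θ s / s ≠ 0 := by
    have : 1 - lam / s + lam * Θ s / s = (s - lam + lam * Θ s) / s := by
      field_simp
    rw [this]
    exact div_ne_zero hD (ne_of_gt hs0)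
  rw [hF s hs0]
  field_simp
  ring
end

section
/- Let g₀(x) = (1/6)·exp(x)·(4·cos(√2·x) − √2·sin(√2·x)). Then the function g₁(x) = (1/6)·exp(x)·(4·cos(√2·x) − √2·sin(√2·x)) − (1/24)·exp(−2/3 + x)·(4·cos(√2·(x−2/3)) − √2·sin(√2·(x−2/3))) + (1/4)·x·exp(−2/3 + x)·(cos(√2·(x−2/3)) + 2√2·sin(√2·(x−2/3))) satisfies the delay differential equation g₁″(x) = 2·g₁′(x) − 3·g₁(x) + 3·g₀(x − 2/3) for all x, together with the matching conditions g₁(2/3) = g₀(2/3) and g₁′(2/3) = 1 + g₀′(2/3). -/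
/-- With `g₀(x) = (1/6)eˣ(4cos(√2 x) − √2 sin(√2 x))`, the stated
function `g₁` satisfies the delay differential equation
`g₁″(x) = 2g₁′(x) − 3g₁(x) + 3g₀(x − 2/3)` for all `x`, with matching
conditions `g₁(2/3) = g₀(2/3)` and `g₁′(2/3) = 1 + g₀′(2/3)`. -/
theorem stmt_7 (g₀ g₁ : ℝ → ℝ)
    (hg₀ : ∀ x : ℝ, g₀ x = (1 / 6) * Real.exp x *
      (4 * Real.cos (Real.sqrt 2 * x) - Real.sqrt 2 * Real.sin (Real.sqrt 2 * x)))
    (hg₁ : ∀ x : ℝ, g₁ x = (1 / 6) * Real.exp x *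
        (4 * Real.cos (Real.sqrt 2 * x) - Real.sqrt 2 * Real.sin (Real.sqrt 2 * x))
      - (1 / 24) * Real.exp (-2 / 3 + x) *
        (4 * Real.cos (Real.sqrt 2 * (x - 2 / 3))
          - Real.sqrt 2 * Real.sin (Real.sqrt 2 * (x - 2 / 3)))
      + (1 / 4) * x * Real.exp (-2 / 3 + x) *
        (Real.cos (Real.sqrt 2 * (x - 2 / 3))
          + 2 * Real.sqrt 2 * Real.sin (Real.sqrt 2 * (x - 2 / 3)))) :
    (∀ x : ℝ, deriv (deriv g₁) x = 2 * deriv g₁ x - 3 * g₁ x + 3 * g₀ (x - 2 / 3))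
      ∧ g₁ (2 / 3) = g₀ (2 / 3)
      ∧ deriv g₁ (2 / 3) = 1 + deriv g₀ (2 / 3) := by
  set s : ℝ := Real.sqrt 2 with hsdef
  have hs2 : s ^ 2 = 2 := Real.sq_sqrt (by norm_num)
  have hs3 : s ^ 3 = 2 * s := by
    rw [pow_succ, hs2]
  have hs4 : s ^ 4 = 4 := by
    rw [show (4:ℕ) = 2 * 2 from rfl, pow_mul, hs2]; norm_num
  have hg₁' : g₁ = fun x => (1 / 6) * Real.exp x *
        (4 * Real.cos (s * x) - s * Real.sin (s * x))
      - (1 / 24) * Real.exp (-2 / 3 + x) *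
        (4 * Real.cos (s * (x - 2 / 3)) - s * Real.sin (s * (x - 2 / 3)))
      + (1 / 4) * x * Real.exp (-2 / 3 + x) *
        (Real.cos (s * (x - 2 / 3)) + 2 * s * Real.sin (s * (x - 2 / 3))) :=
    funext hg₁
  subst hg₁'
  -- first derivative
  have hD1 : ∀ x : ℝ, HasDerivAt (fun x => (1 / 6) * Real.exp x *
        (4 * Real.cos (s * x) - s * Real.sin (s * x))
      - (1 / 24) * Real.exp (-2 / 3 + x) *
        (4 * Real.cos (s * (x - 2 / 3)) - s * Real.sin (s * (x - 2 / 3)))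
      + (1 / 4) * x * Real.exp (-2 / 3 + x) *
        (Real.cos (s * (x - 2 / 3)) + 2 * s * Real.sin (s * (x - 2 / 3))))
      ((1 / 6) * Real.exp x * (2 * Real.cos (s * x) - 5 * s * Real.sin (s * x))
      - (1 / 24) * Real.exp (-2 / 3 + x) *
        (2 * Real.cos (s * (x - 2 / 3)) - 5 * s * Real.sin (s * (x - 2 / 3)))
      + (1 / 4) * Real.exp (-2 / 3 + x) *
        (Real.cos (s * (x - 2 / 3)) + 2 * s * Real.sin (s * (x - 2 / 3)))
      + (1 / 4) * x * Real.exp (-2 / 3 + x) *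
        (5 * Real.cos (s * (x - 2 / 3)) + s * Real.sin (s * (x - 2 / 3)))) x := by
    intro x
    have hsx : HasDerivAt (fun y : ℝ => s * y) s x := by
      simpa using (hasDerivAt_id x).const_mul s
    have hsx2 : HasDerivAt (fun y : ℝ => s * (y - 2 / 3)) s x := by
      simpa using ((hasDerivAt_id x).sub_const (2/3 : ℝ)).const_mul s
    have hex2 : HasDerivAt (fun y : ℝ => Real.exp (-2 / 3 + y)) (Real.exp (-2 / 3 + x)) x := by
      simpa using ((hasDerivAt_id x).const_add (-2/3 : ℝ)).exp
    have H := ((((Real.hasDerivAt_exp x).const_mul (1/6 : ℝ)).mul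
        ((hsx.cos.const_mul (4:ℝ)).sub (hsx.sin.const_mul s))).sub
      ((hex2.const_mul (1/24 : ℝ)).mul
        ((hsx2.cos.const_mul (4:ℝ)).sub (hsx2.sin.const_mul s)))).add
      ((((hasDerivAt_id x).const_mul (1/4 : ℝ)).mul hex2).mul
        (hsx2.cos.add (hsx2.sin.const_mul (2*s))))
    refine H.congr_deriv ?_
    try simp only [id_eq, Pi.mul_apply, Pi.sub_apply, Pi.add_apply]
    ring_nf
    simp only [hs2, hs3, hs4]
    ring
  -- second derivative
  have hD2 : ∀ x : ℝ, HasDerivAt (fun x =>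
        (1 / 6) * Real.exp x * (2 * Real.cos (s * x) - 5 * s * Real.sin (s * x))
      - (1 / 24) * Real.exp (-2 / 3 + x) *
        (2 * Real.cos (s * (x - 2 / 3)) - 5 * s * Real.sin (s * (x - 2 / 3)))
      + (1 / 4) * Real.exp (-2 / 3 + x) *
        (Real.cos (s * (x - 2 / 3)) + 2 * s * Real.sin (s * (x - 2 / 3)))
      + (1 / 4) * x * Real.exp (-2 / 3 + x) *
        (5 * Real.cos (s * (x - 2 / 3)) + s * Real.sin (s * (x - 2 / 3))))
      ((1 / 6) * Real.exp x * (-8 * Real.cos (s * x) - 7 * s * Real.sin (s * x))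
      - (1 / 24) * Real.exp (-2 / 3 + x) *
        (-8 * Real.cos (s * (x - 2 / 3)) - 7 * s * Real.sin (s * (x - 2 / 3)))
      + (1 / 2) * Real.exp (-2 / 3 + x) *
        (5 * Real.cos (s * (x - 2 / 3)) + s * Real.sin (s * (x - 2 / 3)))
      + (1 / 4) * x * Real.exp (-2 / 3 + x) *
        (7 * Real.cos (s * (x - 2 / 3)) - 4 * s * Real.sin (s * (x - 2 / 3)))) x := by
    intro x
    have hsx : HasDerivAt (fun y : ℝ => s * y) s x := by
      simpa using (hasDerivAt_id x).const_mul s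
    have hsx2 : HasDerivAt (fun y : ℝ => s * (y - 2 / 3)) s x := by
      simpa using ((hasDerivAt_id x).sub_const (2/3 : ℝ)).const_mul s
    have hex2 : HasDerivAt (fun y : ℝ => Real.exp (-2 / 3 + y)) (Real.exp (-2 / 3 + x)) x := by
      simpa using ((hasDerivAt_id x).const_add (-2/3 : ℝ)).exp
    have Ha := ((Real.hasDerivAt_exp x).const_mul (1/6 : ℝ)).mul
        ((hsx.cos.const_mul (2:ℝ)).sub (hsx.sin.const_mul (5*s)))
    have Hb := (hex2.const_mul (1/24 : ℝ)).mul
        ((hsx2.cos.const_mul (2:ℝ)).sub (hsx2.sin.const_mul (5*s)))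
    have Hc := (hex2.const_mul (1/4 : ℝ)).mul
        (hsx2.cos.add (hsx2.sin.const_mul (2*s)))
    have Hd := (((hasDerivAt_id x).const_mul (1/4 : ℝ)).mul hex2).mul
        ((hsx2.cos.const_mul (5:ℝ)).add (hsx2.sin.const_mul s))
    have H := ((Ha.sub Hb).add Hc).add Hd
    refine H.congr_deriv ?_
    try simp only [id_eq, Pi.mul_apply, Pi.sub_apply, Pi.add_apply]
    ring_nf
    simp only [hs2, hs3, hs4]
    ring
  have hder1 : deriv (fun x => (1 / 6) * Real.exp x *
        (4 * Real.cos (s * x) - s * Real.sin (s * x))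
      - (1 / 24) * Real.exp (-2 / 3 + x) *
        (4 * Real.cos (s * (x - 2 / 3)) - s * Real.sin (s * (x - 2 / 3)))
      + (1 / 4) * x * Real.exp (-2 / 3 + x) *
        (Real.cos (s * (x - 2 / 3)) + 2 * s * Real.sin (s * (x - 2 / 3))))
      = fun x => (1 / 6) * Real.exp x * (2 * Real.cos (s * x) - 5 * s * Real.sin (s * x))
      - (1 / 24) * Real.exp (-2 / 3 + x) *
        (2 * Real.cos (s * (x - 2 / 3)) - 5 * s * Real.sin (s * (x - 2 / 3)))
      + (1 / 4) * Real.exp (-2 / 3 + x) *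
        (Real.cos (s * (x - 2 / 3)) + 2 * s * Real.sin (s * (x - 2 / 3)))
      + (1 / 4) * x * Real.exp (-2 / 3 + x) *
        (5 * Real.cos (s * (x - 2 / 3)) + s * Real.sin (s * (x - 2 / 3))) :=
    funext fun x => (hD1 x).deriv
  -- g₀ derivative
  have hD0 : ∀ x : ℝ, HasDerivAt g₀
      ((1 / 6) * Real.exp x * (2 * Real.cos (s * x) - 5 * s * Real.sin (s * x))) x := by
    intro x
    have hg₀' : g₀ = fun x => (1 / 6) * Real.exp x *
        (4 * Real.cos (s * x) - s * Real.sin (s * x)) := funext hg₀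
    rw [hg₀']
    have hsx : HasDerivAt (fun y : ℝ => s * y) s x := by
      simpa using (hasDerivAt_id x).const_mul s
    have H := (((Real.hasDerivAt_exp x).const_mul (1/6 : ℝ)).mul
        ((hsx.cos.const_mul (4:ℝ)).sub (hsx.sin.const_mul s)))
    refine H.congr_deriv ?_
    try simp only [id_eq, Pi.mul_apply, Pi.sub_apply, Pi.add_apply]
    ring_nf
    simp only [hs2, hs3, hs4]
    ring
  refine ⟨?_, ?_, ?_⟩
  · intro x
    rw [hder1, (hD2 x).deriv, hg₀ (x - 2/3)]
    beta_reduce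
    ring
  · rw [hg₀]
    norm_num
  · rw [(hD1 (2/3 : ℝ)).deriv, (hD0 (2/3 : ℝ)).deriv]
    norm_num
    ring
end

section
/- Let λ > 0, a > 0, and 0 < ρ < 1. For each natural number n define the Erlang function hₙ(x) = (1−ρ) · (d/dx) Σ_{m=0}^{n} (−1)^m · λ^m · (x − a·m)^m / m! · exp(λ·(x − a·m)). Then for every n ≥ 1 and every real x, hₙ′(x) = λ·hₙ(x) − λ·h_{n−1}(x − a). -/
noncomputable def cc (lam a : ℝ) (m : ℕ) (y : ℝ) : ℝ :=
  (-1 : ℝ) ^ m * lam ^ m * (y - a * (m : ℝ)) ^ m / (Nat.factorial m : ℝ)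
    * Real.exp (lam * (y - a * (m : ℝ)))

lemma hderiv_cc_raw (lam a : ℝ) (m : ℕ) (y : ℝ) :
    HasDerivAt (fun y : ℝ => cc lam a m y)
      ((-1 : ℝ) ^ m * lam ^ m / (Nat.factorial m : ℝ) *
        (((m : ℝ) * (y - a * m) ^ (m - 1)) * Real.exp (lam * (y - a * m))
          + (y - a * m) ^ m * (lam * Real.exp (lam * (y - a * m))))) y := by
  have h1 : HasDerivAt (fun y : ℝ => (y - a * m) ^ m) ((m : ℝ) * (y - a * m) ^ (m - 1)) y := by
    simpa using ((hasDerivAt_id y).sub_const (a * m)).fun_pow m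
  have h2 : HasDerivAt (fun y : ℝ => Real.exp (lam * (y - a * m)))
      (lam * Real.exp (lam * (y - a * m))) y := by
    simpa [mul_comm] using (((hasDerivAt_id y).sub_const (a * m)).const_mul lam).exp
  have h3 := (h1.mul h2).const_mul ((-1 : ℝ) ^ m * lam ^ m / (Nat.factorial m : ℝ))
  have hfun : (fun y : ℝ => cc lam a m y)
      = fun y : ℝ => ((-1 : ℝ) ^ m * lam ^ m / (Nat.factorial m : ℝ)) *
          ((y - a * m) ^ m * Real.exp (lam * (y - a * m))) := by
    funext y; simp only [cc]; ring
  rw [hfun]; exact h3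

lemma hderiv_cc (lam a : ℝ) (m : ℕ) (y : ℝ) :
    HasDerivAt (fun y : ℝ => cc lam a m y)
      (lam * cc lam a m y - if m = 0 then 0 else lam * cc lam a (m - 1) (y - a)) y := by
  cases m with
  | zero =>
    convert hderiv_cc_raw lam a 0 y using 1
    simp [cc]
  | succ k =>
    convert hderiv_cc_raw lam a (k + 1) y using 1
    have hx : y - a - a * (k : ℝ) = y - a * ((k : ℝ) + 1) := by ring
    simp only [cc, if_neg (Nat.succ_ne_zero k), Nat.succ_sub_one, Nat.factorial_succ]
    push_cast
    rw [hx]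
    have hf : ((k : ℝ) + 1) * (Nat.factorial k : ℝ) ≠ 0 := by positivity
    field_simp
    ring

noncomputable def GG (lam a : ℝ) (n : ℕ) : ℝ → ℝ :=
  fun y => ∑ m ∈ Finset.range (n + 1), cc lam a m y

lemma hderiv_GG (lam a : ℝ) (n : ℕ) (y : ℝ) :
    HasDerivAt (GG lam a n)
      (lam * GG lam a n y - lam * ∑ m ∈ Finset.range n, cc lam a m (y - a)) y := by
  have h := HasDerivAt.fun_sum (u := Finset.range (n + 1))
    (A := fun m (y : ℝ) => cc lam a m y)
    (fun m _ => hderiv_cc lam a m y)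
  have : (∑ m ∈ Finset.range (n + 1),
      (lam * cc lam a m y - if m = 0 then 0 else lam * cc lam a (m - 1) (y - a)))
      = lam * GG lam a n y - lam * ∑ m ∈ Finset.range n, cc lam a m (y - a) := by
    rw [Finset.sum_sub_distrib, Finset.sum_range_succ'
      (fun m => if m = 0 then (0:ℝ) else lam * cc lam a (m - 1) (y - a))]
    simp [GG, Finset.mul_sum]
  rw [← this]
  exact h



/-- With `hₙ` the Erlang pieces of the equilibrium M/D/1
waiting-time density, for every `n ≥ 1` and every real `x`,
`hₙ′(x) = λ·hₙ(x) − λ·h_{n−1}(x − a)`. -/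
theorem stmt_9 (lam a ρ : ℝ) (h : ℕ → ℝ → ℝ)
    (hlam : 0 < lam) (ha : 0 < a) (hρ0 : 0 < ρ) (hρ1 : ρ < 1)
    (hh : ∀ (n : ℕ) (x : ℝ), h n x = (1 - ρ) *
      deriv (fun y : ℝ => ∑ m ∈ Finset.range (n + 1),
        (-1 : ℝ) ^ m * lam ^ m * (y - a * (m : ℝ)) ^ m / (Nat.factorial m : ℝ)
          * Real.exp (lam * (y - a * (m : ℝ)))) x) :
    ∀ n : ℕ, 1 ≤ n → ∀ x : ℝ,
      deriv (h n) x = lam * h n x - lam * h (n - 1) (x - a) := by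
  have hG : ∀ (k : ℕ) (x : ℝ), h k x = (1 - ρ) * deriv (GG lam a k) x := hh
  have hfun : ∀ (k : ℕ) (x : ℝ), h k x
      = (1 - ρ) * (lam * GG lam a k x - lam * ∑ m ∈ Finset.range k, cc lam a m (x - a)) := by
    intro k x
    rw [hG k x, (hderiv_GG lam a k x).deriv]
  intro n hn x
  obtain ⟨k, rfl⟩ : ∃ k, n = k + 1 := ⟨n - 1, (Nat.succ_pred_eq_of_pos hn).symm⟩
  have hEq : h (k + 1) = fun x => (1 - ρ) *
      (lam * GG lam a (k + 1) x - lam * GG lam a k (x - a)) := by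
    funext x
    exact hfun (k + 1) x
  have d1 := hderiv_GG lam a (k + 1) x
  have d2 : HasDerivAt (fun x : ℝ => GG lam a k (x - a))
      ((lam * GG lam a k (x - a) -
        lam * ∑ m ∈ Finset.range k, cc lam a m (x - a - a)) * 1) x :=
    by have := (hderiv_GG lam a k (x - a)).comp x ((hasDerivAt_id x).sub_const a); exact this
  have D : HasDerivAt (h (k + 1))
      ((1 - ρ) * (lam * (lam * GG lam a (k + 1) x - lam * GG lam a k (x - a))
        - lam * ((lam * GG lam a k (x - a) -
            lam * ∑ m ∈ Finset.range k, cc lam a m (x - a - a)) * 1))) x := by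
    rw [hEq]
    exact ((d1.const_mul lam).sub (d2.const_mul lam)).const_mul (1 - ρ)
  rw [D.deriv, hfun (k + 1) x]
  simp only [Nat.add_sub_cancel]
  rw [hfun k (x - a),
    show (∑ m ∈ Finset.range (k + 1), cc lam a m (x - a)) = GG lam a k (x - a) from rfl]
  ring
end

section
/- Let λ > 0, a > 0, and 0 < ρ < 1, and let hₙ(x) = (1−ρ) · (d/dx) Σ_{m=0}^{n} (−1)^m · λ^m · (x − a·m)^m / m! · exp(λ·(x − a·m)) be the Erlang functions. Then h₁(a) = h₀(a) − λ·(1−ρ), and for every n ≥ 2, hₙ(n·a) = h_{n−1}(n·a). -/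
private lemma term_hasDerivAt (lam c : ℝ) (K : ℝ) (m : ℕ) (x : ℝ) :
    HasDerivAt (fun y : ℝ => K * (y - c) ^ m * Real.exp (lam * (y - c)))
      (K * ((m : ℝ) * (x - c) ^ (m - 1) * Real.exp (lam * (x - c))
        + (x - c) ^ m * lam * Real.exp (lam * (x - c)))) x := by
  have h1 : HasDerivAt (fun y : ℝ => (y - c) ^ m) ((m : ℝ) * (x - c) ^ (m - 1)) x := by
    simpa using ((hasDerivAt_id x).sub_const c).fun_pow m
  have h2 : HasDerivAt (fun y : ℝ => Real.exp (lam * (y - c)))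
      (Real.exp (lam * (x - c)) * lam) x := by
    have : HasDerivAt (fun y : ℝ => lam * (y - c)) lam x := by
      simpa using ((hasDerivAt_id x).sub_const c).const_mul lam
    simpa using this.exp
  have := ((h1.const_mul K).fun_mul h2)
  refine this.congr_deriv ?_
  ring

/-- With `hₙ` the Erlang pieces of the equilibrium M/D/1
waiting-time density, `h₁(a) = h₀(a) − λ·(1−ρ)` (jump discontinuity at `x = a`),
and for every `n ≥ 2`, `hₙ(n·a) = h_{n−1}(n·a)` (continuity at later breakpoints). -/
theorem stmt_10 (lam a ρ : ℝ) (h : ℕ → ℝ → ℝ)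
    (hlam : 0 < lam) (ha : 0 < a) (hρ0 : 0 < ρ) (hρ1 : ρ < 1)
    (hh : ∀ (n : ℕ) (x : ℝ), h n x = (1 - ρ) *
      deriv (fun y : ℝ => ∑ m ∈ Finset.range (n + 1),
        (-1 : ℝ) ^ m * lam ^ m * (y - a * (m : ℝ)) ^ m / (Nat.factorial m : ℝ)
          * Real.exp (lam * (y - a * (m : ℝ)))) x) :
    h 1 a = h 0 a - lam * (1 - ρ)
      ∧ ∀ n : ℕ, 2 ≤ n → h n ((n : ℝ) * a) = h (n - 1) ((n : ℝ) * a) := by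
  set T : ℕ → ℝ → ℝ := fun m y =>
    (-1 : ℝ) ^ m * lam ^ m * (y - a * (m : ℝ)) ^ m / (Nat.factorial m : ℝ)
      * Real.exp (lam * (y - a * (m : ℝ))) with hT
  set D : ℕ → ℝ → ℝ := fun m x =>
    ((-1 : ℝ) ^ m * lam ^ m / (Nat.factorial m : ℝ)) *
      ((m : ℝ) * (x - a * m) ^ (m - 1) * Real.exp (lam * (x - a * m))
        + (x - a * m) ^ m * lam * Real.exp (lam * (x - a * m))) with hD
  have hTd : ∀ m x, HasDerivAt (T m) (D m x) x := by
    intro m x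
    have := term_hasDerivAt lam (a * m)
      ((-1 : ℝ) ^ m * lam ^ m / (Nat.factorial m : ℝ)) m x
    refine HasDerivAt.congr_of_eventuallyEq this ?_
    filter_upwards with y
    simp only [hT]
    ring
  have hderiv : ∀ n x, deriv (fun y => ∑ m ∈ Finset.range (n + 1), T m y) x
      = ∑ m ∈ Finset.range (n + 1), D m x := by
    intro n x
    exact (HasDerivAt.fun_sum (fun m _ => hTd m x)).deriv
  have hval : ∀ n x, h n x = (1 - ρ) * ∑ m ∈ Finset.range (n + 1), D m x := by
    intro n x
    rw [hh n x, hderiv]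
  constructor
  · have h1 := hval 1 a
    have h0 := hval 0 a
    rw [h1, h0, Finset.sum_range_succ]
    have : D 1 a = -lam := by
      simp [hD]
    rw [this]
    ring
  · intro n hn
    have hval' : h n ((n : ℝ) * a) = (1 - ρ) *
        ((∑ m ∈ Finset.range n, D m ((n : ℝ) * a)) + D n ((n : ℝ) * a)) := by
      rw [hval, Finset.sum_range_succ]
    have hDn : D n ((n : ℝ) * a) = 0 := by
      have hx : (n : ℝ) * a - a * n = 0 := by ring
      have h1 : ((n : ℝ) * a - a * n) ^ (n - 1) = 0 := by
        rw [hx]; exact zero_pow (by omega)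
      have h2 : ((n : ℝ) * a - a * n) ^ n = 0 := by
        rw [hx]; exact zero_pow (by omega)
      simp [hD, h1, h2]
    have hprev : h (n - 1) ((n : ℝ) * a)
        = (1 - ρ) * ∑ m ∈ Finset.range n, D m ((n : ℝ) * a) := by
      have := hval (n - 1) ((n : ℝ) * a)
      rwa [Nat.sub_add_cancel (by omega)] at this
    rw [hval', hDn, hprev]
    ring
end
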